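/- Let k be a field of characteristic 5 and let s ∈ k satisfy s² = 2. Let (x, y) be an affine point of the elliptic curve E : y² = x³ − 1 over k with x ≠ 1, set u = (2x² + 3x + 1)/(x − 1) and v = 2·s·y·(x² + 3x + 3)/(x − 1)², and assume u ≠ 1. Then the affine point ((2u² + 3u + 1)/(u − 1), 2·s·v·(u² + 3u + 3)/(u − 1)²) of E equals −(2 • (x, y)) in the group law of E; that is, the square of the isogeny φ_{E,2} equals multiplication by −2 on E. -/

import Mathlib

/-!
Let `k` be a field of characteristic 5 and let `s ∈ k` satisfy `s² = 2`.  Let `(x, y)`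
be an affine point of the elliptic curve `E : y² = x³ − 1` over `k` with `x ≠ 1`, set
`u = (2x² + 3x + 1)/(x − 1)` and `v = 2·s·y·(x² + 3x + 3)/(x − 1)²`, and assume
`u ≠ 1`.  Then the affine point
`((2u² + 3u + 1)/(u − 1), 2·s·v·(u² + 3u + 3)/(u − 1)²)` of `E` equals `−(2 • (x, y))`
in the group law of `E`; that is, the square of the isogeny `φ_{E,2}` equals
multiplication by `−2` on `E`.
-/

/-- The elliptic curve `y² = x³ − 1` (in affine Weierstrass form) over a field `k`. -/
def E (k : Type*) [Field k] : WeierstrassCurve.Affine k :=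
  { a₁ := 0, a₂ := 0, a₃ := 0, a₄ := 0, a₆ := -1 }

open Classical in
theorem phi_E2_squared_eq_neg_two_smul {k : Type*} [Field k] [CharP k 5]
    (s : k) (hs : s ^ 2 = 2) (x y : k) (h : (E k).Nonsingular x y) (hx : x ≠ 1)
    (u v : k) (hu : u = (2 * x ^ 2 + 3 * x + 1) / (x - 1))
    (hv : v = 2 * s * y * (x ^ 2 + 3 * x + 3) / (x - 1) ^ 2) (hu1 : u ≠ 1) :
    ∃ h' : (E k).Nonsingular ((2 * u ^ 2 + 3 * u + 1) / (u - 1))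
        (2 * s * v * (u ^ 2 + 3 * u + 3) / (u - 1) ^ 2),
      WeierstrassCurve.Affine.Point.some _ _ h' =
        -(2 • WeierstrassCurve.Affine.Point.some _ _ h) := by
  have h5 : (5 : k) = 0 := by exact_mod_cast CharP.cast_eq_zero k 5
  have hx1 : x - 1 ≠ 0 := sub_ne_zero.mpr hx
  have h2 : (2 : k) ≠ 0 := by
    intro h2
    have : (1 : k) = 0 := by linear_combination 3 * h2 - h5
    exact one_ne_zero this
  have hy2 : y ^ 2 = x ^ 3 - 1 := by
    have := ((E k).equation_iff x y).mp h.1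
    simp only [E] at this
    linear_combination this
  have hy0 : y ≠ 0 := by
    intro hy
    apply hu1
    have hx3 : x ^ 2 + x + 1 = 0 := by
      have : (x - 1) * (x ^ 2 + x + 1) = 0 := by rw [hy] at hy2; linear_combination -hy2
      rcases mul_eq_zero.mp this with h' | h'
      · exact absurd h' hx1
      · exact h'
    rw [hu, div_eq_one_iff_eq hx1]
    linear_combination 2 * hx3
  have hyne : y ≠ (E k).negY x y := by
    simp only [WeierstrassCurve.Affine.negY, E]
    intro hcon
    apply hy0
    have : 2 * y = 0 := by linear_combination hcon
    exact (mul_eq_zero.mp this).resolve_left h2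
  have hU : x ^ 2 + x + 1 ≠ 0 := by
    intro hc
    apply hu1
    rw [hu, div_eq_one_iff_eq hx1]
    linear_combination 2 * hc
  subst hu hv
  have key : -(2 • WeierstrassCurve.Affine.Point.some _ _ h)
      = WeierstrassCurve.Affine.Point.some _ _
          (WeierstrassCurve.Affine.nonsingular_negAdd h h (fun hxy => hyne hxy.right)) := by
    rw [two_nsmul, WeierstrassCurve.Affine.Point.add_self_of_Y_ne' hyne, neg_neg]
  have hLval : (E k).slope x x y y = 3 * x ^ 2 / (2 * y) := by
    rw [WeierstrassCurve.Affine.slope_of_Y_ne rfl hyne]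
    simp only [E, WeierstrassCurve.Affine.negY]
    ring_nf
  have h2y : 2 * y ≠ 0 := mul_ne_zero h2 hy0
  set U : k := (2 * x ^ 2 + 3 * x + 1) / (x - 1) with hUdef
  have hUm1 : U - 1 = 2 * (x ^ 2 + x + 1) / (x - 1) := by
    rw [hUdef]; field_simp; ring
  have hUm1ne : U - 1 ≠ 0 := by
    rw [hUm1]
    exact div_ne_zero (mul_ne_zero h2 hU) hx1
  have hX : (2 * U ^ 2 + 3 * U + 1) / (U - 1)
      = (E k).addX x x ((E k).slope x x y y) := by
    rw [hLval]
    simp only [WeierstrassCurve.Affine.addX, E]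
    rw [div_eq_iff hUm1ne, hUdef]
    field_simp
    linear_combination ((120 : k)*x^2 + (120 : k)*x^3 + (48 : k)*x^4) * hy2 + (0 : k) * hs + ((-24 : k)*x^2 + (-24 : k)*x^3 + (-6 : k)*x^4 + (24 : k)*x^5 + (24 : k)*x^6 + (6 : k)*x^7) * h5
  have hY : 2 * s * (2 * s * y * (x ^ 2 + 3 * x + 3) / (x - 1) ^ 2) * (U ^ 2 + 3 * U + 3) / (U - 1) ^ 2
      = (E k).negAddY x x y ((E k).slope x x y y) := by
    rw [WeierstrassCurve.Affine.negAddY, WeierstrassCurve.Affine.addX, hLval]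
    simp only [E]
    rw [div_eq_iff (pow_ne_zero 2 hUm1ne), hUdef]
    field_simp
    linear_combination ((32 : k) + (-96 : k)*s^2 + (-32 : k)*y^2 + (96 : k)*y^2*s^2 + (480 : k)*x^1*s^2 + (-480 : k)*x^1*y^2*s^2 + (-1280 : k)*x^2*s^2 + (1280 : k)*x^2*y^2*s^2 + (48 : k)*x^3 + (-3264 : k)*x^3*s^2 + (64 : k)*x^3*y^2 + (3360 : k)*x^3*y^2*s^2 + (-3200 : k)*x^4*s^2 + (2720 : k)*x^4*y^2*s^2 + (320 : k)*x^5*s^2 + (960 : k)*x^5*y^2*s^2 + (-192 : k)*x^6 + (3232 : k)*x^6*s^2 + (-32 : k)*x^6*y^2 + (128 : k)*x^6*y^2*s^2 + (2720 : k)*x^7*s^2 + (960 : k)*x^8*s^2 + (112 : k)*x^9 + (128 : k)*x^9*s^2) * hy2 + ((96 : k) + (-480 : k)*x^1 + (1280 : k)*x^2 + (3168 : k)*x^3 + (3680 : k)*x^4 + (-1600 : k)*x^5 + (-6496 : k)*x^6 + (-5920 : k)*x^7 + (-640 : k)*x^8 + (3104 : k)*x^9 + (2720 : k)*x^10 + (960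 : k)*x^11 + (128 : k)*x^12) * hs + ((32 : k) + (-192 : k)*x^1 + (512 : k)*x^2 + (1264 : k)*x^3 + (1472 : k)*x^4 + (-640 : k)*x^5 + (-2572 : k)*x^6 + (-2368 : k)*x^7 + (-256 : k)*x^8 + (1224 : k)*x^9 + (1088 : k)*x^10 + (384 : k)*x^11 + (52 : k)*x^12) * h5
  rw [hX, hY, key]
  exact ⟨_, rfl⟩
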